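/- Let Σ be a 2×2 positive definite matrix with inverse Ω, and let (Z, L) given b be bivariate normal with mean (0, b) and covariance Σ, where b ~ G for a probability distribution G on ℝ. Then the conditional CDF of Z given L = l equals F_G(z | l) = (C(Σ)/f_G(l)) ∫_{−∞}^{z} exp(−u²/(2Σ₁₁)) · f_G((Ω₁₂/Ω₂₂)u + l; Ω₂₂⁻¹) du, where f_G(t; v) = ∫ φ(t − b; v) dG(b) is the Gaussian mixture density with noise variance v, f_G(l) = f_G(l; Σ₂₂), and C(Σ) = (2π|Σ|Ω₂₂)^{−1/2}. -/

import Mathlib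

open MeasureTheory

/-- Gaussian mixture density `f_G(t; v) = ∫ φ(t − b; v) dG(b)`. -/
noncomputable def gmix (G : Measure ℝ) (v t : ℝ) : ℝ :=
  ∫ b, (Real.sqrt (2 * Real.pi * v))⁻¹ * Real.exp (-(t - b) ^ 2 / (2 * v)) ∂G

/-- Bivariate normal density with mean `(0, b)` and covariance `Σ = [[s11,s12],[s12,s22]]`,
evaluated at `(z, l)`. -/
noncomputable def bivNormal (s11 s12 s22 b z l : ℝ) : ℝ :=
  (2 * Real.pi * Real.sqrt (s11 * s22 - s12 ^ 2))⁻¹ *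
    Real.exp (-(1 / 2) *
      ((s22 * z ^ 2 - 2 * s12 * z * (l - b) + s11 * (l - b) ^ 2) / (s11 * s22 - s12 ^ 2)))

/-- **Conditional CDF of `Z` given `L = l` under the partially Bayes model.**
With `(Z, L) | b ~ N((0, b), Σ)`, `b ~ G`, `Σ` positive definite with inverse `Ω`,
the conditional CDF (the normalized partial integral of the joint marginal density)
equals `(C(Σ)/f_G(l)) ∫_{−∞}^z exp(−u²/(2Σ₁₁)) f_G((Ω₁₂/Ω₂₂)u + l; Ω₂₂⁻¹) du`,
where `f_G(l) = f_G(l; Σ₂₂)`, `C(Σ) = (2π|Σ|Ω₂₂)^{−1/2}`, `Ω₁₂/Ω₂₂ = −s12/s11`,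
and `Ω₂₂⁻¹ = |Σ|/s11`. -/
theorem stmt6 (G : Measure ℝ) [IsProbabilityMeasure G]
    (s11 s12 s22 : ℝ) (hs11 : 0 < s11) (hs22 : 0 < s22)
    (hdet : 0 < s11 * s22 - s12 ^ 2)
    (z l : ℝ) (hl : 0 < gmix G s22 l) :
    (∫ u in Set.Iic z, ∫ b, bivNormal s11 s12 s22 b u l ∂G) / gmix G s22 l =
      (Real.sqrt (2 * Real.pi * (s11 * s22 - s12 ^ 2) *
          (s11 / (s11 * s22 - s12 ^ 2))))⁻¹ / gmix G s22 l *
        ∫ u in Set.Iic z,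
          Real.exp (-u ^ 2 / (2 * s11)) *
            gmix G ((s11 * s22 - s12 ^ 2) / s11) (-s12 / s11 * u + l) := by
  set d := s11 * s22 - s12 ^ 2 with hd
  have hdne : d ≠ 0 := ne_of_gt hdet
  have hs11ne : s11 ≠ 0 := ne_of_gt hs11
  have hC : Real.sqrt (2 * Real.pi * d * (s11 / d)) = Real.sqrt (2 * Real.pi * s11) := by
    congr 1; field_simp
  have hconst : (Real.sqrt (2 * Real.pi * s11))⁻¹ * (Real.sqrt (2 * Real.pi * (d / s11)))⁻¹
      = (2 * Real.pi * Real.sqrt d)⁻¹ := by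
    rw [← mul_inv, ← Real.sqrt_mul (by positivity)]
    congr 1
    rw [show 2 * Real.pi * s11 * (2 * Real.pi * (d / s11)) = (2 * Real.pi) ^ 2 * d by
        field_simp,
      Real.sqrt_mul (by positivity), Real.sqrt_sq (by positivity)]
  have hpt : ∀ u b : ℝ, bivNormal s11 s12 s22 b u l
      = (Real.sqrt (2 * Real.pi * s11))⁻¹ * Real.exp (-u ^ 2 / (2 * s11)) *
        ((Real.sqrt (2 * Real.pi * (d / s11)))⁻¹ *
          Real.exp (-((-s12 / s11 * u + l) - b) ^ 2 / (2 * (d / s11)))) := by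
    intro u b
    unfold bivNormal
    rw [mul_mul_mul_comm, hconst, ← Real.exp_add, ← hd]
    congr 1
    rw [Real.exp_eq_exp]
    field_simp
    rw [hd]
    ring
  have hinner : ∀ u : ℝ, (∫ b, bivNormal s11 s12 s22 b u l ∂G)
      = (Real.sqrt (2 * Real.pi * s11))⁻¹ *
        (Real.exp (-u ^ 2 / (2 * s11)) * gmix G (d / s11) (-s12 / s11 * u + l)) := by
    intro u
    simp only [hpt u]
    rw [integral_const_mul, mul_assoc]
    rfl
  rw [hC]
  simp only [hinner]
  rw [integral_const_mul, mul_div_right_comm]
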